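/- Let A be a Hopf algebra over a field, B a central Hopf subalgebra of A such that A is (left or right) faithfully flat over B, and let J ⊆ B⁺ = B ∩ ker ε be a Hopf ideal of B. Then the two-sided ideal (J) = AJ generated by J in A is a Hopf ideal of A, and the canonical map B/J → A/AJ is injective. -/

import Mathlib

open TensorProduct

/-- A (two-sided) Hopf ideal of a Hopf algebra `A`: an ideal `I` with `ε(I) = 0`,
`Δ(I) ⊆ I ⊗ A + A ⊗ I` and `S(I) ⊆ I`. -/
def IsHopfIdeal (k : Type*) {A : Type*} [CommSemiring k] [Semiring A]
    [HopfAlgebra k A] (I : Submodule k A) : Prop :=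
  (∀ a : A, ∀ x ∈ I, a * x ∈ I ∧ x * a ∈ I) ∧
  (∀ x ∈ I, Coalgebra.counit (R := k) x = 0) ∧
  (∀ x ∈ I, Coalgebra.comul (R := k) x ∈
    LinearMap.range (TensorProduct.map I.subtype (LinearMap.id : A →ₗ[k] A)) ⊔
      LinearMap.range (TensorProduct.map (LinearMap.id : A →ₗ[k] A) I.subtype)) ∧
  (∀ x ∈ I, HopfAlgebra.antipode (R := k) x ∈ I)

section Conv

variable {k A B : Type*} [CommSemiring k] [Semiring A] [HopfAlgebra k A]
  [CommSemiring B] [HopfAlgebra k B]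

open Coalgebra HopfAlgebra

noncomputable def convAB (f g : A ⊗[k] B →ₗ[k] A) : A ⊗[k] B →ₗ[k] A :=
  LinearMap.mul' k A ∘ₗ TensorProduct.map f g ∘ₗ
    (TensorProduct.tensorTensorTensorComm k A A B B).toLinearMap ∘ₗ
      TensorProduct.map (Coalgebra.comul (R := k)) (Coalgebra.comul (R := k))

theorem convAB_apply_tmul (f g : A ⊗[k] B →ₗ[k] A) (x : A) (b : B) :
    convAB f g (x ⊗ₜ[k] b)
      = LinearMap.mul' k A (TensorProduct.map f g
          ((TensorProduct.tensorTensorTensorComm k A A B B)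
            (Coalgebra.comul (R := k) x ⊗ₜ[k] Coalgebra.comul (R := k) b))) := by
  simp [convAB]

theorem convAB_assoc (f g h : A ⊗[k] B →ₗ[k] A) :
    convAB (convAB f g) h = convAB f (convAB g h) := by
  refine TensorProduct.ext' fun x b => ?_
  set ttt := (TensorProduct.tensorTensorTensorComm k A A B B).toLinearMap with httt
  set ttt₁ := (TensorProduct.tensorTensorTensorComm k (A ⊗[k] A) A (B ⊗[k] B) B).toLinearMap
    with httt₁
  set ttt₂ := (TensorProduct.tensorTensorTensorComm k A (A ⊗[k] A) B (B ⊗[k] B)).toLinearMap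
    with httt₂
  set ΔA := (Coalgebra.comul (R := k) (A := A)) with hΔA
  set ΔB := (Coalgebra.comul (R := k) (A := B)) with hΔB
  set P := LinearMap.mul' k A ∘ₗ TensorProduct.map f g ∘ₗ ttt with hP
  set Q := LinearMap.mul' k A ∘ₗ TensorProduct.map g h ∘ₗ ttt with hQ
  have E2 : TensorProduct.map (convAB f g) h ∘ₗ ttt
      = TensorProduct.map P h ∘ₗ ttt₁ ∘ₗ
          TensorProduct.map (ΔA.rTensor A) (ΔB.rTensor B) := by
    ext x y z w
    simp [convAB, ttt, ttt₁, P, ΔA, ΔB]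
  have E3 : TensorProduct.map f (convAB g h) ∘ₗ ttt
      = TensorProduct.map f Q ∘ₗ ttt₂ ∘ₗ
          TensorProduct.map (ΔA.lTensor A) (ΔB.lTensor B) := by
    ext x y z w
    simp [convAB, ttt, ttt₂, Q, ΔA, ΔB]
  have E1 : LinearMap.mul' k A ∘ₗ TensorProduct.map P h ∘ₗ ttt₁
      = LinearMap.mul' k A ∘ₗ TensorProduct.map f Q ∘ₗ ttt₂ ∘ₗ
        TensorProduct.map (TensorProduct.assoc k A A A).toLinearMap
          (TensorProduct.assoc k B B B).toLinearMap := by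
    ext x₁ x₂ x₃ b₁ b₂ b₃
    simp [ttt, ttt₁, ttt₂, P, Q, mul_assoc]
  have e2 := LinearMap.congr_fun E2 (ΔA x ⊗ₜ[k] ΔB b)
  have e3 := LinearMap.congr_fun E3 (ΔA x ⊗ₜ[k] ΔB b)
  have e1 := LinearMap.congr_fun E1
    ((ΔA.rTensor A (ΔA x)) ⊗ₜ[k] (ΔB.rTensor B (ΔB b)))
  simp only [LinearMap.comp_apply, TensorProduct.map_tmul] at e1 e2 e3
  rw [convAB_apply_tmul, convAB_apply_tmul]
  show LinearMap.mul' k A (TensorProduct.map (convAB f g) h (ttt (ΔA x ⊗ₜ[k] ΔB b)))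
      = LinearMap.mul' k A (TensorProduct.map f (convAB g h) (ttt (ΔA x ⊗ₜ[k] ΔB b)))
  rw [e2, e3]
  simp only [LinearEquiv.coe_coe] at e1
  rw [Coalgebra.coassoc_apply, Coalgebra.coassoc_apply] at e1
  exact e1

end Conv

section Conv2
variable {k A B : Type*} [CommSemiring k] [Semiring A] [HopfAlgebra k A]
  [CommSemiring B] [HopfAlgebra k B]

open Coalgebra HopfAlgebra

noncomputable def unitAB (k A B : Type*) [CommSemiring k] [Semiring A] [HopfAlgebra k A]
    [CommSemiring B] [HopfAlgebra k B] : A ⊗[k] B →ₗ[k] A :=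
  Algebra.linearMap k A ∘ₗ (TensorProduct.lid k k).toLinearMap ∘ₗ
    TensorProduct.map (Coalgebra.counit (R := k)) (Coalgebra.counit (R := k))

theorem convAB_unit_right (f : A ⊗[k] B →ₗ[k] A) : convAB f (unitAB k A B) = f := by
  refine TensorProduct.ext' fun x b => ?_
  rw [convAB_apply_tmul]
  set cA := (TensorProduct.rid k A).toLinearMap ∘ₗ
    (Coalgebra.counit (R := k) (A := A)).lTensor A with hcA
  set cB := (TensorProduct.rid k B).toLinearMap ∘ₗ
    (Coalgebra.counit (R := k) (A := B)).lTensor B with hcB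
  have H : LinearMap.mul' k A ∘ₗ TensorProduct.map f (unitAB k A B) ∘ₗ
      (TensorProduct.tensorTensorTensorComm k A A B B).toLinearMap
      = f ∘ₗ TensorProduct.map cA cB := by
    ext x₁ x₂ b₁ b₂
    simp only [LinearMap.comp_apply, TensorProduct.map_tmul, LinearEquiv.coe_coe,
      AlgebraTensorModule.curry_apply, curry_apply, LinearMap.coe_restrictScalars,
      TensorProduct.tensorTensorTensorComm_tmul, LinearMap.mul'_apply, unitAB, cA, cB,
      TensorProduct.lid_tmul, TensorProduct.rid_tmul, LinearMap.lTensor_tmul,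
      Algebra.linearMap_apply, map_smul]
    rw [mul_smul_comm, ← Algebra.commutes, ← Algebra.smul_def,
      TensorProduct.tmul_smul, ← TensorProduct.smul_tmul', map_smul, map_smul, smul_comm]
  have h1 := LinearMap.congr_fun H
    (Coalgebra.comul (R := k) x ⊗ₜ[k] Coalgebra.comul (R := k) b)
  simp only [LinearMap.comp_apply, TensorProduct.map_tmul, LinearEquiv.coe_coe] at h1
  rw [h1, hcA, hcB]
  simp only [LinearMap.comp_apply, Coalgebra.lTensor_counit_comul, LinearEquiv.coe_coe,
    TensorProduct.rid_tmul, one_smul]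

theorem convAB_unit_left (f : A ⊗[k] B →ₗ[k] A) : convAB (unitAB k A B) f = f := by
  refine TensorProduct.ext' fun x b => ?_
  rw [convAB_apply_tmul]
  set cA := (TensorProduct.lid k A).toLinearMap ∘ₗ
    (Coalgebra.counit (R := k) (A := A)).rTensor A with hcA
  set cB := (TensorProduct.lid k B).toLinearMap ∘ₗ
    (Coalgebra.counit (R := k) (A := B)).rTensor B with hcB
  have H : LinearMap.mul' k A ∘ₗ TensorProduct.map (unitAB k A B) f ∘ₗ
      (TensorProduct.tensorTensorTensorComm k A A B B).toLinearMap
      = f ∘ₗ TensorProduct.map cA cB := by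
    ext x₁ x₂ b₁ b₂
    simp only [LinearMap.comp_apply, TensorProduct.map_tmul, LinearEquiv.coe_coe,
      AlgebraTensorModule.curry_apply, curry_apply, LinearMap.coe_restrictScalars,
      TensorProduct.tensorTensorTensorComm_tmul, LinearMap.mul'_apply, unitAB, cA, cB,
      TensorProduct.lid_tmul, TensorProduct.rid_tmul, LinearMap.rTensor_tmul,
      Algebra.linearMap_apply, map_smul]
    rw [smul_mul_assoc, ← Algebra.smul_def,
      TensorProduct.tmul_smul, ← TensorProduct.smul_tmul', map_smul, map_smul, smul_comm]
  have h1 := LinearMap.congr_fun H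
    (Coalgebra.comul (R := k) x ⊗ₜ[k] Coalgebra.comul (R := k) b)
  simp only [LinearMap.comp_apply, TensorProduct.map_tmul, LinearEquiv.coe_coe] at h1
  rw [h1, hcA, hcB]
  simp only [LinearMap.comp_apply, Coalgebra.rTensor_counit_comul, LinearEquiv.coe_coe,
    TensorProduct.lid_tmul, one_smul]

end Conv2

section Antipode
variable {k A B : Type*} [CommSemiring k] [Semiring A] [HopfAlgebra k A]
  [CommSemiring B] [HopfAlgebra k B]

open Coalgebra HopfAlgebra

theorem antipode_mul_of_central (i : B →ₐ[k] A)
    (hicomul : ∀ b : B, Coalgebra.comul (R := k) (i b)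
      = (TensorProduct.map i.toLinearMap i.toLinearMap) (Coalgebra.comul (R := k) b))
    (hicounit : ∀ b : B, Coalgebra.counit (R := k) (i b) = Coalgebra.counit (R := k) b)
    (hcentral : ∀ (b : B) (x : A), i b * x = x * i b)
    (a : A) (b : B) :
    antipode (R := k) (a * i b) = antipode (R := k) a * i (antipode (R := k) b) := by
  have hFM : convAB (antipode (R := k) ∘ₗ
        (LinearMap.mul' k A ∘ₗ TensorProduct.map LinearMap.id i.toLinearMap))
        (LinearMap.mul' k A ∘ₗ TensorProduct.map LinearMap.id i.toLinearMap)
      = unitAB k A B := by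
    refine TensorProduct.ext' fun x b => ?_
    rw [convAB_apply_tmul]
    have key : LinearMap.mul' k A ∘ₗ TensorProduct.map
          (antipode (R := k) ∘ₗ
            (LinearMap.mul' k A ∘ₗ TensorProduct.map LinearMap.id i.toLinearMap))
          (LinearMap.mul' k A ∘ₗ TensorProduct.map LinearMap.id i.toLinearMap) ∘ₗ
          (TensorProduct.tensorTensorTensorComm k A A B B).toLinearMap
        = LinearMap.mul' k A ∘ₗ (antipode (R := k)).rTensor A ∘ₗ
            LinearMap.mul' k (A ⊗[k] A) ∘ₗ
            (TensorProduct.map i.toLinearMap i.toLinearMap).lTensor (A ⊗[k] A) := by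
      ext x₁ x₂ b₁ b₂
      simp [Algebra.TensorProduct.tmul_mul_tmul]
    have h1 := LinearMap.congr_fun key
      (Coalgebra.comul (R := k) x ⊗ₜ[k] Coalgebra.comul (R := k) b)
    simp only [LinearMap.comp_apply, LinearEquiv.coe_coe, LinearMap.lTensor_tmul] at h1
    rw [h1, ← hicomul, LinearMap.mul'_apply, ← Bialgebra.comul_mul,
      HopfAlgebra.mul_antipode_rTensor_comul_apply, Bialgebra.counit_mul, hicounit]
    simp [unitAB, Algebra.linearMap_apply, smul_eq_mul, map_mul]
  have hMG : convAB (LinearMap.mul' k A ∘ₗ TensorProduct.map LinearMap.id i.toLinearMap)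
        (LinearMap.mul' k A ∘ₗ
          TensorProduct.map (antipode (R := k)) (i.toLinearMap ∘ₗ antipode (R := k)))
      = unitAB k A B := by
    refine TensorProduct.ext' fun x b => ?_
    rw [convAB_apply_tmul]
    have key : LinearMap.mul' k A ∘ₗ TensorProduct.map
          (LinearMap.mul' k A ∘ₗ TensorProduct.map LinearMap.id i.toLinearMap)
          (LinearMap.mul' k A ∘ₗ
            TensorProduct.map (antipode (R := k)) (i.toLinearMap ∘ₗ antipode (R := k))) ∘ₗ
          (TensorProduct.tensorTensorTensorComm k A A B B).toLinearMap
        = LinearMap.mul' k A ∘ₗ TensorProduct.map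
            (LinearMap.mul' k A ∘ₗ (antipode (R := k)).lTensor A)
            (i.toLinearMap ∘ₗ LinearMap.mul' k B ∘ₗ (antipode (R := k)).lTensor B) := by
      ext x₁ x₂ b₁ b₂
      simp only [LinearMap.comp_apply, TensorProduct.map_tmul, LinearEquiv.coe_coe,
        AlgebraTensorModule.curry_apply, curry_apply, LinearMap.coe_restrictScalars,
        TensorProduct.tensorTensorTensorComm_tmul, LinearMap.mul'_apply,
        LinearMap.lTensor_tmul, LinearMap.id_coe, id_eq, AlgHom.toLinearMap_apply,
        map_mul]
      rw [mul_assoc x₁ (i b₁), ← mul_assoc (i b₁), hcentral b₁,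
        mul_assoc (antipode (R := k) x₂), ← mul_assoc x₁]
    have h1 := LinearMap.congr_fun key
      (Coalgebra.comul (R := k) x ⊗ₜ[k] Coalgebra.comul (R := k) b)
    simp only [LinearMap.comp_apply, LinearEquiv.coe_coe, TensorProduct.map_tmul] at h1
    rw [h1, LinearMap.mul'_apply, HopfAlgebra.mul_antipode_lTensor_comul_apply,
      HopfAlgebra.mul_antipode_lTensor_comul_apply]
    simp [unitAB, AlgHom.toLinearMap_apply, AlgHom.commutes, Algebra.linearMap_apply,
      smul_eq_mul, map_mul]
  have hFG : (antipode (R := k) ∘ₗ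
        (LinearMap.mul' k A ∘ₗ TensorProduct.map LinearMap.id i.toLinearMap) :
          A ⊗[k] B →ₗ[k] A)
      = LinearMap.mul' k A ∘ₗ
          TensorProduct.map (antipode (R := k)) (i.toLinearMap ∘ₗ antipode (R := k)) := by
    calc antipode (R := k) ∘ₗ
          (LinearMap.mul' k A ∘ₗ TensorProduct.map LinearMap.id i.toLinearMap)
        = convAB (antipode (R := k) ∘ₗ
            (LinearMap.mul' k A ∘ₗ TensorProduct.map LinearMap.id i.toLinearMap))
            (unitAB k A B) := (convAB_unit_right _).symm
      _ = convAB (antipode (R := k) ∘ₗ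
            (LinearMap.mul' k A ∘ₗ TensorProduct.map LinearMap.id i.toLinearMap))
            (convAB (LinearMap.mul' k A ∘ₗ TensorProduct.map LinearMap.id i.toLinearMap)
              (LinearMap.mul' k A ∘ₗ TensorProduct.map (antipode (R := k))
                (i.toLinearMap ∘ₗ antipode (R := k)))) := by rw [hMG]
      _ = convAB (convAB (antipode (R := k) ∘ₗ
            (LinearMap.mul' k A ∘ₗ TensorProduct.map LinearMap.id i.toLinearMap))
            (LinearMap.mul' k A ∘ₗ TensorProduct.map LinearMap.id i.toLinearMap))
            (LinearMap.mul' k A ∘ₗ TensorProduct.map (antipode (R := k))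
              (i.toLinearMap ∘ₗ antipode (R := k))) := (convAB_assoc _ _ _).symm
      _ = convAB (unitAB k A B) (LinearMap.mul' k A ∘ₗ TensorProduct.map (antipode (R := k))
            (i.toLinearMap ∘ₗ antipode (R := k))) := by rw [hFM]
      _ = LinearMap.mul' k A ∘ₗ TensorProduct.map (antipode (R := k))
            (i.toLinearMap ∘ₗ antipode (R := k)) := convAB_unit_left _
  have := LinearMap.congr_fun hFG (a ⊗ₜ[k] b)
  simpa using this

end Antipode

open TensorProduct


set_option maxHeartbeats 1000000 in
set_option synthInstance.maxHeartbeats 400000 in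
/-- Let `A` be a Hopf algebra over a field, `B` a central Hopf
subalgebra (realized by an injective Hopf algebra map `i : B → A` with central image)
over which `A` is faithfully flat, and `J ⊆ B⁺` a Hopf ideal of `B`.  Then `AJ` is a
Hopf ideal of `A` and the canonical map `B/J → A/AJ` is injective, i.e.
`i⁻¹(AJ) = J`. -/
theorem hopf_ideal_generated_and_injective (k : Type*) [Field k]
    (A : Type*) [Ring A] [HopfAlgebra k A]
    (B : Type*) [CommRing B] [HopfAlgebra k B]
    (i : B →ₐ[k] A) (hinj : Function.Injective i)
    -- i is a map of Hopf algebras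
    (hicomul : ∀ b : B, Coalgebra.comul (R := k) (i b)
      = (TensorProduct.map i.toLinearMap i.toLinearMap) (Coalgebra.comul (R := k) b))
    (hicounit : ∀ b : B, Coalgebra.counit (R := k) (i b) = Coalgebra.counit (R := k) b)
    (hiantipode : ∀ b : B, HopfAlgebra.antipode (R := k) (i b)
      = i (HopfAlgebra.antipode (R := k) b))
    -- B is central in A
    (hcentral : ∀ (b : B) (x : A), i b * x = x * i b)
    -- A is faithfully flat over B
    (hff : letI : Module B A := Module.compHom A i.toRingHom;
      Module.FaithfullyFlat B A)
    (J : Ideal B)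
    (hJaug : ∀ x ∈ J, Coalgebra.counit (R := k) x = 0)
    (hJHopf : IsHopfIdeal k (J.restrictScalars k))
    (AJ : Submodule k A)
    (hAJ : AJ = Submodule.span k {x | ∃ a : A, ∃ j ∈ J, x = a * i j}) :
    IsHopfIdeal k AJ ∧ ∀ b : B, i b ∈ AJ ↔ b ∈ J := by
  subst hAJ
  set S : Set A := {x | ∃ a : A, ∃ j ∈ J, x = a * i j} with hS
  have hgen : ∀ (a : A) (j : B), j ∈ J → a * i j ∈ Submodule.span k S :=
    fun a j hj => Submodule.subset_span ⟨a, j, hj, rfl⟩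
  -- Part 1: two-sided ideal
  have hIdeal : ∀ c : A, ∀ x ∈ Submodule.span k S,
      c * x ∈ Submodule.span k S ∧ x * c ∈ Submodule.span k S := by
    intro c x hx
    refine Submodule.span_induction ?_ ?_ ?_ ?_ hx
    · rintro y ⟨a, j, hj, rfl⟩
      constructor
      · rw [← mul_assoc]; exact hgen _ _ hj
      · rw [mul_assoc, hcentral j c, ← mul_assoc]; exact hgen _ _ hj
    · simp
    · rintro y z _ _ ⟨hy1, hy2⟩ ⟨hz1, hz2⟩
      exact ⟨by rw [mul_add]; exact Submodule.add_mem _ hy1 hz1,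
        by rw [add_mul]; exact Submodule.add_mem _ hy2 hz2⟩
    · rintro r y _ ⟨hy1, hy2⟩
      exact ⟨by rw [mul_smul_comm]; exact Submodule.smul_mem _ _ hy1,
        by rw [smul_mul_assoc]; exact Submodule.smul_mem _ _ hy2⟩
  -- Part 2: counit vanishes
  have hCounit : ∀ x ∈ Submodule.span k S, Coalgebra.counit (R := k) x = 0 := by
    intro x hx
    refine Submodule.span_induction ?_ ?_ ?_ ?_ hx
    · rintro y ⟨a, j, hj, rfl⟩
      rw [Bialgebra.counit_mul, hicounit, hJaug j hj, mul_zero]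
    · simp
    · intro y z _ _ hy hz; rw [map_add, hy, hz, add_zero]
    · intro r y _ hy; rw [map_smul, hy, smul_zero]
  -- Part 3: coideal
  have hK1 : ∀ (u : A ⊗[k] A) (s : (Submodule.span k S) ⊗[k] A),
      u * (TensorProduct.map (Submodule.span k S).subtype LinearMap.id s) ∈
        LinearMap.range (TensorProduct.map (Submodule.span k S).subtype
          (LinearMap.id : A →ₗ[k] A)) := by
    intro u s
    induction s using TensorProduct.induction_on with
    | zero => rw [map_zero, mul_zero]; exact Submodule.zero_mem _
    | tmul p q =>
      induction u using TensorProduct.induction_on with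
      | zero => rw [zero_mul]; exact Submodule.zero_mem _
      | tmul c d =>
        refine ⟨(⟨c * p.1, (hIdeal c p.1 p.2).1⟩ : Submodule.span k S) ⊗ₜ[k] (d * q), ?_⟩
        simp [Algebra.TensorProduct.tmul_mul_tmul]
      | add u₁ u₂ h₁ h₂ => rw [add_mul]; exact Submodule.add_mem _ h₁ h₂
    | add s₁ s₂ h₁ h₂ => rw [map_add, mul_add]; exact Submodule.add_mem _ h₁ h₂
  have hK2 : ∀ (u : A ⊗[k] A) (s : A ⊗[k] (Submodule.span k S)),
      u * (TensorProduct.map LinearMap.id (Submodule.span k S).subtype s) ∈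
        LinearMap.range (TensorProduct.map (LinearMap.id : A →ₗ[k] A)
          (Submodule.span k S).subtype) := by
    intro u s
    induction s using TensorProduct.induction_on with
    | zero => rw [map_zero, mul_zero]; exact Submodule.zero_mem _
    | tmul p q =>
      induction u using TensorProduct.induction_on with
      | zero => rw [zero_mul]; exact Submodule.zero_mem _
      | tmul c d =>
        refine ⟨(c * p) ⊗ₜ[k] (⟨d * q.1, (hIdeal d q.1 q.2).1⟩ : Submodule.span k S), ?_⟩
        simp [Algebra.TensorProduct.tmul_mul_tmul]
      | add u₁ u₂ h₁ h₂ => rw [add_mul]; exact Submodule.add_mem _ h₁ h₂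
    | add s₁ s₂ h₁ h₂ => rw [map_add, mul_add]; exact Submodule.add_mem _ h₁ h₂
  have hKmul : ∀ (u t : A ⊗[k] A), t ∈
      LinearMap.range (TensorProduct.map (Submodule.span k S).subtype
        (LinearMap.id : A →ₗ[k] A)) ⊔
      LinearMap.range (TensorProduct.map (LinearMap.id : A →ₗ[k] A)
        (Submodule.span k S).subtype) →
      u * t ∈
      LinearMap.range (TensorProduct.map (Submodule.span k S).subtype
        (LinearMap.id : A →ₗ[k] A)) ⊔
      LinearMap.range (TensorProduct.map (LinearMap.id : A →ₗ[k] A)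
        (Submodule.span k S).subtype) := by
    intro u t ht
    rcases Submodule.mem_sup.1 ht with ⟨t₁, ht₁, t₂, ht₂, rfl⟩
    rcases ht₁ with ⟨s₁, rfl⟩
    rcases ht₂ with ⟨s₂, rfl⟩
    rw [mul_add]
    exact Submodule.add_mem _ (Submodule.mem_sup_left (hK1 u s₁))
      (Submodule.mem_sup_right (hK2 u s₂))
  have hmapK : ∀ t : B ⊗[k] B, t ∈
      LinearMap.range (TensorProduct.map (J.restrictScalars k).subtype
        (LinearMap.id : B →ₗ[k] B)) ⊔
      LinearMap.range (TensorProduct.map (LinearMap.id : B →ₗ[k] B)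
        (J.restrictScalars k).subtype) →
      TensorProduct.map i.toLinearMap i.toLinearMap t ∈
      LinearMap.range (TensorProduct.map (Submodule.span k S).subtype
        (LinearMap.id : A →ₗ[k] A)) ⊔
      LinearMap.range (TensorProduct.map (LinearMap.id : A →ₗ[k] A)
        (Submodule.span k S).subtype) := by
    have hiJ : ∀ j : J.restrictScalars k, i j.1 ∈ Submodule.span k S := by
      intro j
      have := hgen 1 j.1 j.2
      rwa [one_mul] at this
    set i' : (J.restrictScalars k) →ₗ[k] (Submodule.span k S) :=
      LinearMap.codRestrict _ (i.toLinearMap ∘ₗ (J.restrictScalars k).subtype)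
        (fun j => hiJ j) with hi'
    intro t ht
    rcases Submodule.mem_sup.1 ht with ⟨t₁, ht₁, t₂, ht₂, rfl⟩
    rcases ht₁ with ⟨s₁, rfl⟩
    rcases ht₂ with ⟨s₂, rfl⟩
    rw [map_add]
    refine Submodule.add_mem _ (Submodule.mem_sup_left ?_) (Submodule.mem_sup_right ?_)
    · refine ⟨TensorProduct.map i' i.toLinearMap s₁, ?_⟩
      have e : TensorProduct.map (Submodule.span k S).subtype
            (LinearMap.id : A →ₗ[k] A) ∘ₗ TensorProduct.map i' i.toLinearMap
          = TensorProduct.map i.toLinearMap i.toLinearMap ∘ₗ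
            TensorProduct.map (J.restrictScalars k).subtype (LinearMap.id : B →ₗ[k] B) := by
        rw [← TensorProduct.map_comp, ← TensorProduct.map_comp]
        congr 1 <;> ext x <;> simp [i']
      exact LinearMap.congr_fun e s₁
    · refine ⟨TensorProduct.map i.toLinearMap i' s₂, ?_⟩
      have e : TensorProduct.map (LinearMap.id : A →ₗ[k] A)
            (Submodule.span k S).subtype ∘ₗ TensorProduct.map i.toLinearMap i'
          = TensorProduct.map i.toLinearMap i.toLinearMap ∘ₗ
            TensorProduct.map (LinearMap.id : B →ₗ[k] B) (J.restrictScalars k).subtype := by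
        rw [← TensorProduct.map_comp, ← TensorProduct.map_comp]
        congr 1 <;> ext x <;> simp [i']
      exact LinearMap.congr_fun e s₂
  have hComul : ∀ x ∈ Submodule.span k S, Coalgebra.comul (R := k) x ∈
      LinearMap.range (TensorProduct.map (Submodule.span k S).subtype
        (LinearMap.id : A →ₗ[k] A)) ⊔
      LinearMap.range (TensorProduct.map (LinearMap.id : A →ₗ[k] A)
        (Submodule.span k S).subtype) := by
    intro x hx
    refine Submodule.span_induction ?_ ?_ ?_ ?_ hx
    · rintro y ⟨a, j, hj, rfl⟩
      rw [Bialgebra.comul_mul, hicomul]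
      exact hKmul _ _ (hmapK _ (hJHopf.2.2.1 j hj))
    · rw [map_zero]; exact Submodule.zero_mem _
    · intro y z _ _ hy hz; rw [map_add]; exact Submodule.add_mem _ hy hz
    · intro r y _ hy; rw [map_smul]; exact Submodule.smul_mem _ _ hy
  -- Part 4: antipode
  have hAnti : ∀ x ∈ Submodule.span k S,
      HopfAlgebra.antipode (R := k) x ∈ Submodule.span k S := by
    intro x hx
    refine Submodule.span_induction ?_ ?_ ?_ ?_ hx
    · rintro y ⟨a, j, hj, rfl⟩
      rw [antipode_mul_of_central i hicomul hicounit hcentral a j]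
      exact hgen _ _ (hJHopf.2.2.2 j hj)
    · rw [map_zero]; exact Submodule.zero_mem _
    · intro y z _ _ hy hz; rw [map_add]; exact Submodule.add_mem _ hy hz
    · intro r y _ hy; rw [map_smul]; exact Submodule.smul_mem _ _ hy
  refine ⟨⟨hIdeal, hCounit, hComul, hAnti⟩, ?_⟩
  -- Part 5: faithfully flat descent
  letI : Module B A := Module.compHom A i.toRingHom
  haveI hffI : Module.FaithfullyFlat B A := hff
  have hsmul : ∀ (c : B) (x : A), c • x = i c * x := fun c x => rfl
  intro b
  constructor
  · intro hb
    have hJA : ∀ x ∈ Submodule.span k S, x ∈ J • (⊤ : Submodule B A) := by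
      intro x hx
      refine Submodule.span_induction ?_ ?_ ?_ ?_ hx
      · rintro y ⟨a, j, hj, rfl⟩
        have hy : a * i j = j • a := by rw [hsmul, hcentral]
        rw [hy]; exact Submodule.smul_mem_smul hj trivial
      · exact Submodule.zero_mem _
      · intro y z _ _ hy hz; exact Submodule.add_mem _ hy hz
      · intro r y _ hy
        have : r • y = (algebraMap k B r) • y := by
          rw [hsmul, AlgHom.commutes, ← Algebra.smul_def]
        rw [this]; exact Submodule.smul_mem _ _ hy
    have h1A : i b ∈ J • (⊤ : Submodule B A) := hJA _ hb
    set I : Ideal B := J.colon (Ideal.span {b}) with hI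
    set f0 : B →ₗ[B] B ⧸ J := J.mkQ ∘ₗ LinearMap.toSpanSingleton B B b with hf0
    have hker : ∀ r : B, f0 r = 0 ↔ r ∈ I := by
      intro r
      rw [hf0]
      simp only [LinearMap.comp_apply, LinearMap.toSpanSingleton_apply, Submodule.mkQ_apply,
        Submodule.Quotient.mk_eq_zero, smul_eq_mul]
      rw [hI]; exact (Ideal.mem_colon_span_singleton).symm
    set inc : (B ⧸ I) →ₗ[B] B ⧸ J :=
      Submodule.liftQ (I : Submodule B B) f0 (fun r hr => LinearMap.mem_ker.2 ((hker r).2 hr)) with hinc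
    have hinc_inj : Function.Injective inc := by
      rw [← LinearMap.ker_eq_bot]
      exact Submodule.ker_liftQ_eq_bot _ _ _ (fun r hr => (hker r).1 hr)
    have e1 : (inc.rTensor A) ((Ideal.Quotient.mk I 1) ⊗ₜ[B] (1 : A))
        = (Ideal.Quotient.mk J b) ⊗ₜ[B] (1 : A) := by
      rw [LinearMap.rTensor_tmul]
      congr 1
      show inc (Submodule.Quotient.mk (1 : B)) = _
      rw [hinc, Submodule.liftQ_apply, hf0]
      simp only [LinearMap.comp_apply, LinearMap.toSpanSingleton_apply, Submodule.mkQ_apply,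
        one_smul]
      rfl
    have e2 : ((Ideal.Quotient.mk J b) ⊗ₜ[B] (1 : A)) = 0 := by
      have h := quotTensorEquivQuotSMul_mk_tmul (M := A) J b (1 : A)
      have hb1 : (b • (1 : A)) = i b := by rw [hsmul, mul_one]
      have hz : quotTensorEquivQuotSMul A J ((Ideal.Quotient.mk J b) ⊗ₜ[B] (1 : A)) = 0 := by
        rw [h, hb1, Submodule.Quotient.mk_eq_zero]; exact h1A
      exact (map_eq_zero_iff _ (quotTensorEquivQuotSMul A J).injective).1 hz
    have e3 : (Ideal.Quotient.mk I 1) ⊗ₜ[B] (1 : A) = 0 := by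
      apply Module.Flat.rTensor_preserves_injective_linearMap inc hinc_inj
      rw [e1, e2, map_zero]
    have e4 : (1 : A) ∈ (I • (⊤ : Submodule B A)) := by
      have h := quotTensorEquivQuotSMul_mk_tmul (M := A) I 1 (1 : A)
      rw [e3, map_zero] at h
      rw [one_smul] at h
      rw [← Submodule.Quotient.mk_eq_zero]
      exact h.symm
    have e5 : I • (⊤ : Submodule B A) = ⊤ := by
      rw [eq_top_iff]
      intro a _
      have ha : a = a * 1 := (mul_one a).symm
      rw [ha]
      refine Submodule.smul_induction_on e4 ?_ ?_
      · intro r hr n _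
        have : a * (r • n) = r • (a * n) := by
          rw [hsmul, hsmul, ← mul_assoc, ← hcentral, mul_assoc]
        rw [this]; exact Submodule.smul_mem_smul hr trivial
      · intro x y hx hy; rw [mul_add]; exact Submodule.add_mem _ hx hy
    have e6 : I = ⊤ :=
      ((Module.FaithfullyFlat.iff_flat_and_ideal_smul_eq_top B A).1 hffI).2 I e5
    have h1I : (1 : B) ∈ I := e6 ▸ trivial
    have := Ideal.mem_colon_span_singleton.1 h1I
    rwa [one_mul] at this
  · intro hj
    exact Submodule.subset_span ⟨1, b, hj, (one_mul _).symm⟩
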